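/- arXiv:2110.01132 — 3 statements merged into one kernel-verified Lean document; each statement's English description precedes it below -/
import Mathlib

section
/- Let U be a uniformly distributed random variable on (0,1] (i.e., consider the probability space (0,1] with Lebesgue measure). Then the sequence of digit functions X_k(u) = N(L^{k−1}(u)), k ≥ 1, is a sequence of independent, identically distributed random variables taking values in the positive integers with P(X_1 = n) = 1/(n(n+1)) for every n ≥ 1. -/
open MeasureTheory ProbabilityTheory

/-- The digit function `N(x) = ⌊1/x⌋` of the Luroth expansion. -/
noncomputable def lurothN (x : ℝ) : ℤ := ⌊1 / x⌋

/-- The Luroth map `L(x) = N(x)((N(x)+1)x - 1)`. -/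
noncomputable def lurothL (x : ℝ) : ℝ :=
  (lurothN x) * ((lurothN x + 1) * x - 1)

/-- The digit functions `X_k(u) = N(L^{k-1}(u))`, `k ≥ 1`; here indexed by `k - 1 ∈ ℕ`. -/
noncomputable def lurothDigit (k : ℕ) (u : ℝ) : ℤ := lurothN (lurothL^[k] u)


lemma measurable_lurothN : Measurable lurothN := by
  unfold lurothN
  exact Measurable.floor (measurable_const.div measurable_id)

lemma measurable_lurothL : Measurable lurothL := by
  unfold lurothL
  have h : Measurable (fun x => (lurothN x : ℝ)) :=
    (measurable_from_top (f := (Int.cast : ℤ → ℝ))).comp measurable_lurothN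
  exact h.mul (((h.add measurable_const).mul measurable_id).sub measurable_const)

lemma measurable_lurothDigit (k : ℕ) : Measurable (lurothDigit k) :=
  measurable_lurothN.comp (measurable_lurothL.iterate k)

/-- The fundamental intervals. -/
def Jset (n : ℕ) : Set ℝ := Set.Ioc (1 / (n + 2)) (1 / (n + 1))

lemma Jset_subset (n : ℕ) : Jset n ⊆ Set.Ioc 0 1 := by
  intro u hu
  obtain ⟨h1, h2⟩ := hu
  have hp : (0:ℝ) < (n:ℝ) + 2 := by positivity
  constructor
  · exact lt_trans (by positivity) h1
  · calc u ≤ 1 / ((n:ℝ) + 1) := h2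
      _ ≤ 1 := by rw [div_le_one (by positivity)]; linarith

lemma lurothN_eq {n : ℕ} {u : ℝ} (hu : u ∈ Jset n) : lurothN u = (n : ℤ) + 1 := by
  obtain ⟨h1, h2⟩ := hu
  have hp1 : (0:ℝ) < (n:ℝ) + 1 := by positivity
  have hp2 : (0:ℝ) < (n:ℝ) + 2 := by positivity
  have hu0 : 0 < u := lt_trans (by positivity) h1
  unfold lurothN
  rw [Int.floor_eq_iff]
  push_cast
  constructor
  · rw [le_div_iff₀ hu0]
    calc ((n:ℝ)+1) * u ≤ ((n:ℝ)+1) * (1/((n:ℝ)+1)) :=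
          mul_le_mul_of_nonneg_left h2 (le_of_lt hp1)
      _ = 1 := by field_simp
  · rw [div_lt_iff₀ hu0]
    calc (1:ℝ) = ((n:ℝ)+2) * (1/((n:ℝ)+2)) := by field_simp
      _ < ((n:ℝ)+2) * u := mul_lt_mul_of_pos_left h1 hp2
      _ = ((n:ℝ)+1+1) * u := by ring

lemma lurothL_eq {n : ℕ} {u : ℝ} (hu : u ∈ Jset n) :
    lurothL u = (((n:ℝ)+1) * ((n:ℝ)+2)) * u + (-(((n:ℝ)+1))) := by
  unfold lurothL
  rw [lurothN_eq hu]
  push_cast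
  ring

lemma exists_Jset {u : ℝ} (hu : u ∈ Set.Ioc (0:ℝ) 1) : ∃ n : ℕ, u ∈ Jset n := by
  obtain ⟨h0, h1⟩ := hu
  have hfl : 1 ≤ ⌊1/u⌋ := by
    rw [Int.le_floor]
    push_cast
    rw [le_div_iff₀ h0]
    linarith
  refine ⟨(⌊1/u⌋ - 1).toNat, ?_⟩
  set m : ℤ := ⌊1/u⌋ with hm
  have hmn : ((⌊1/u⌋ - 1).toNat : ℤ) = m - 1 := Int.toNat_of_nonneg (by omega)
  have hcast : (((⌊1/u⌋ - 1).toNat : ℝ)) = (m : ℝ) - 1 := by exact_mod_cast hmn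
  have hle : (m : ℝ) ≤ 1/u := Int.floor_le _
  have hlt : 1/u < (m : ℝ) + 1 := Int.lt_floor_add_one _
  have hm1 : (1:ℝ) ≤ (m:ℝ) := by exact_mod_cast hfl
  constructor
  · rw [hcast]
    have h2 : (m:ℝ) - 1 + 2 = (m:ℝ) + 1 := by ring
    rw [h2, div_lt_iff₀ (by linarith), ← div_lt_iff₀' h0]
    exact hlt
  · rw [hcast]
    have h2 : (m:ℝ) - 1 + 1 = (m:ℝ) := by ring
    rw [h2, le_div_iff₀ (by linarith)]
    calc u * (m:ℝ) ≤ u * (1/u) := mul_le_mul_of_nonneg_left hle (le_of_lt h0)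
      _ = 1 := by field_simp

lemma vol_Jset (n : ℕ) :
    volume (Jset n) = ENNReal.ofReal (1 / (((n:ℝ)+1) * ((n:ℝ)+2))) := by
  unfold Jset
  rw [Real.volume_Ioc]
  congr 1
  have h1 : (0:ℝ) < (n:ℝ)+1 := by positivity
  have h2 : (0:ℝ) < (n:ℝ)+2 := by positivity
  field_simp
  ring

lemma vol_preimage_affine {c : ℝ} (hc : 0 < c) (d : ℝ) (C : Set ℝ) :
    volume ((fun u : ℝ => c * u + d) ⁻¹' C) = ENNReal.ofReal (1/c) * volume C := by
  have : (fun u : ℝ => c * u + d) ⁻¹' C = (c * ·) ⁻¹' ((· + d) ⁻¹' C) := rfl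
  rw [this, Real.volume_preimage_mul_left (ne_of_gt hc)]
  have ht : volume ((· + d) ⁻¹' C) = volume C := by
    have := measure_preimage_add_right (volume : Measure ℝ) d C
    simpa using this
  rw [ht, abs_of_pos (by positivity), one_div]

lemma Jset_eq_preimage (n : ℕ) :
    Jset n = (fun u : ℝ => (((n:ℝ)+1) * ((n:ℝ)+2)) * u + (-(((n:ℝ)+1)))) ⁻¹' Set.Ioc 0 1 := by
  have h1 : (0:ℝ) < (n:ℝ)+1 := by positivity
  have h2 : (0:ℝ) < (n:ℝ)+2 := by positivity
  have hc : (0:ℝ) < ((n:ℝ)+1) * ((n:ℝ)+2) := by positivity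
  ext u
  simp only [Jset, Set.mem_Ioc, Set.mem_preimage]
  constructor
  · rintro ⟨ha, hb⟩
    constructor
    · have : (((n:ℝ)+1) * ((n:ℝ)+2)) * (1/((n:ℝ)+2)) = (n:ℝ)+1 := by field_simp
      nlinarith
    · have : (((n:ℝ)+1) * ((n:ℝ)+2)) * (1/((n:ℝ)+1)) = (n:ℝ)+2 := by field_simp
      nlinarith
  · rintro ⟨ha, hb⟩
    constructor
    · rw [div_lt_iff₀ h2]; nlinarith
    · rw [le_div_iff₀ h1]; nlinarith

lemma vol_Jset_inter {B : Set ℝ} (n : ℕ) :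
    volume (Jset n ∩ lurothL ⁻¹' B)
      = volume (Jset n) * volume (B ∩ Set.Ioc (0:ℝ) 1) := by
  set c : ℝ := ((n:ℝ)+1) * ((n:ℝ)+2) with hcdef
  set d : ℝ := -(((n:ℝ)+1)) with hddef
  have hc : (0:ℝ) < c := by positivity
  have hset : Jset n ∩ lurothL ⁻¹' B = (fun u : ℝ => c * u + d) ⁻¹' (Set.Ioc 0 1 ∩ B) := by
    ext u
    simp only [Set.mem_inter_iff, Set.mem_preimage]
    constructor
    · rintro ⟨hJ, hL⟩
      have heq := lurothL_eq hJ
      constructor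
      · have h' : u ∈ (fun u : ℝ => c * u + d) ⁻¹' Set.Ioc 0 1 := by
          rw [← Jset_eq_preimage n]; exact hJ
        exact h'
      · rw [← heq]; exact hL
    · rintro ⟨hI, hB⟩
      have hJ : u ∈ Jset n := by rw [Jset_eq_preimage n]; exact hI
      refine ⟨hJ, ?_⟩
      show lurothL u ∈ B
      rw [lurothL_eq hJ]
      exact hB
  rw [hset, vol_preimage_affine hc, vol_Jset]
  rw [Set.inter_comm]

lemma measurableSet_Jset (n : ℕ) : MeasurableSet (Jset n) := measurableSet_Ioc

lemma Jset_disjoint : Pairwise (Function.onFun Disjoint Jset) := by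
  intro m n hmn
  rw [Function.onFun, Set.disjoint_left]
  intro u hm hn
  have h1 := lurothN_eq hm
  have h2 := lurothN_eq hn
  apply hmn
  have : (m:ℤ) = (n:ℤ) := by omega
  exact_mod_cast this

open Classical in
lemma luroth_key (A : Set ℤ) {B : Set ℝ} (hB : MeasurableSet B) :
    volume ((lurothN ⁻¹' A ∩ lurothL ⁻¹' B) ∩ Set.Ioc (0:ℝ) 1)
      = volume (lurothN ⁻¹' A ∩ Set.Ioc (0:ℝ) 1) * volume (B ∩ Set.Ioc (0:ℝ) 1) := by
  set K : ℕ → Set ℝ := fun n => if ((n:ℤ)+1) ∈ A then Jset n else ∅ with hK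
  have hKsub : ∀ n, K n ⊆ Jset n := by
    intro n
    by_cases h : ((n:ℤ)+1) ∈ A <;> simp [hK, h]
  have hdecomp : lurothN ⁻¹' A ∩ Set.Ioc (0:ℝ) 1 = ⋃ n, K n := by
    ext u
    constructor
    · rintro ⟨hA, hIoc⟩
      obtain ⟨n, hn⟩ := exists_Jset hIoc
      refine Set.mem_iUnion.mpr ⟨n, ?_⟩
      have : ((n:ℤ)+1) ∈ A := by rw [← lurothN_eq hn]; exact hA
      simp [hK, this, hn]
    · intro hu
      obtain ⟨n, hn⟩ := Set.mem_iUnion.mp hu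
      by_cases h : ((n:ℤ)+1) ∈ A
      · simp only [hK, if_pos h] at hn
        exact ⟨by rw [Set.mem_preimage, lurothN_eq hn]; exact h, Jset_subset n hn⟩
      · simp [hK, if_neg h] at hn
  have hdisj : Pairwise (Function.onFun Disjoint K) :=
    fun m n h => (Jset_disjoint h).mono (hKsub m) (hKsub n)
  have hmeas : ∀ n, MeasurableSet (K n) := by
    intro n
    by_cases h : ((n:ℤ)+1) ∈ A <;> simp [hK, h, measurableSet_Jset]
  have h1 : (lurothN ⁻¹' A ∩ lurothL ⁻¹' B) ∩ Set.Ioc (0:ℝ) 1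
      = ⋃ n, (K n ∩ lurothL ⁻¹' B) := by
    rw [Set.inter_right_comm, hdecomp, Set.iUnion_inter]
  rw [h1, hdecomp]
  rw [measure_iUnion (fun m n h => (hdisj h).mono Set.inter_subset_left Set.inter_subset_left)
    (fun n => (hmeas n).inter (measurable_lurothL hB)),
    measure_iUnion hdisj hmeas]
  have hterm : ∀ n, volume (K n ∩ lurothL ⁻¹' B) = volume (K n) * volume (B ∩ Set.Ioc (0:ℝ) 1) := by
    intro n
    by_cases h : ((n:ℤ)+1) ∈ A
    · simp only [hK, if_pos h]
      exact vol_Jset_inter n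
    · simp [hK, if_neg h]
  simp_rw [hterm]
  exact ENNReal.tsum_mul_right

lemma vol_Ioc01 : volume (Set.Ioc (0:ℝ) 1) = 1 := by
  rw [Real.volume_Ioc]
  norm_num

lemma luroth_preserve {B : Set ℝ} (hB : MeasurableSet B) :
    volume (lurothL ⁻¹' B ∩ Set.Ioc (0:ℝ) 1) = volume (B ∩ Set.Ioc (0:ℝ) 1) := by
  have h := luroth_key Set.univ hB
  simpa [vol_Ioc01] using h

lemma luroth_preserve_iter (k : ℕ) {B : Set ℝ} (hB : MeasurableSet B) :
    volume ((lurothL^[k]) ⁻¹' B ∩ Set.Ioc (0:ℝ) 1) = volume (B ∩ Set.Ioc (0:ℝ) 1) := by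
  induction k with
  | zero => simp
  | succ k ih =>
    rw [Function.iterate_succ, Set.preimage_comp,
      luroth_preserve ((measurable_lurothL.iterate k) hB)]
    exact ih

lemma digit_zero : lurothDigit 0 = lurothN := by
  funext u
  simp [lurothDigit]

lemma digit_succ (k : ℕ) (A : Set ℤ) :
    lurothDigit (k+1) ⁻¹' A = lurothL ⁻¹' (lurothDigit k ⁻¹' A) := by
  ext u
  simp [lurothDigit, Function.iterate_succ_apply]

lemma vol_digit_shift (k : ℕ) (A : Set ℤ) :
    volume (lurothDigit (k+1) ⁻¹' A ∩ Set.Ioc (0:ℝ) 1)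
      = volume (lurothDigit k ⁻¹' A ∩ Set.Ioc (0:ℝ) 1) := by
  rw [digit_succ, luroth_preserve (measurable_lurothDigit k trivial)]

lemma shift_iInter (T : Finset ℕ) (h0 : 0 ∉ T) (A : ℕ → Set ℤ) :
    (⋂ i ∈ T, lurothDigit i ⁻¹' A i)
      = lurothL ⁻¹' (⋂ j ∈ T.image (· - 1), lurothDigit j ⁻¹' A (j+1)) := by
  rw [Set.preimage_iInter₂]
  rw [Finset.set_biInter_finset_image]
  apply Set.iInter₂_congr
  intro i hi
  have hi1 : 1 ≤ i := Nat.one_le_iff_ne_zero.mpr (fun h => h0 (h ▸ hi))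
  rw [← digit_succ, Nat.sub_add_cancel hi1]

lemma shift_prod (T : Finset ℕ) (h0 : 0 ∉ T) (A : ℕ → Set ℤ) :
    (∏ j ∈ T.image (· - 1), volume (lurothDigit j ⁻¹' A (j+1) ∩ Set.Ioc (0:ℝ) 1))
      = ∏ i ∈ T, volume (lurothDigit i ⁻¹' A i ∩ Set.Ioc (0:ℝ) 1) := by
  rw [Finset.prod_image]
  · apply Finset.prod_congr rfl
    intro i hi
    have hi1 : 1 ≤ i := Nat.one_le_iff_ne_zero.mpr (fun h => h0 (h ▸ hi))
    rw [← vol_digit_shift, Nat.sub_add_cancel hi1]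
  · intro a ha b hb hab
    have ha1 : 1 ≤ a := Nat.one_le_iff_ne_zero.mpr (fun h => h0 (h ▸ ha))
    have hb1 : 1 ≤ b := Nat.one_le_iff_ne_zero.mpr (fun h => h0 (h ▸ hb))
    simp only at hab
    omega

lemma luroth_prod (m : ℕ) : ∀ (S : Finset ℕ), (∀ i ∈ S, i < m) → ∀ A : ℕ → Set ℤ,
    volume ((⋂ i ∈ S, lurothDigit i ⁻¹' A i) ∩ Set.Ioc (0:ℝ) 1)
      = ∏ i ∈ S, volume (lurothDigit i ⁻¹' A i ∩ Set.Ioc (0:ℝ) 1) := by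
  induction m with
  | zero =>
    intro S hS A
    have hSe : S = ∅ := Finset.eq_empty_of_forall_notMem fun i hi => Nat.not_lt_zero i (hS i hi)
    subst hSe
    simp [vol_Ioc01]
  | succ m ih =>
    intro S hS A
    by_cases h0 : 0 ∈ S
    · set T := S.erase 0 with hT
      have hT0 : 0 ∉ T := Finset.notMem_erase 0 S
      have hS' : S = insert 0 T := (Finset.insert_erase h0).symm
      have hBmeas : MeasurableSet (⋂ j ∈ T.image (· - 1), lurothDigit j ⁻¹' A (j+1)) :=
        Finset.measurableSet_biInter _ fun j _ => measurable_lurothDigit j trivial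
      have hbound : ∀ j ∈ T.image (· - 1), j < m := by
        intro j hj
        obtain ⟨i, hi, rfl⟩ := Finset.mem_image.mp hj
        have hi1 : 1 ≤ i := Nat.one_le_iff_ne_zero.mpr (fun h => hT0 (h ▸ hi))
        have := hS i (Finset.mem_of_mem_erase hi)
        omega
      rw [hS', Finset.set_biInter_insert, shift_iInter T hT0 A, digit_zero]
      rw [luroth_key (A 0) hBmeas]
      rw [ih (T.image (· - 1)) hbound (fun j => A (j+1))]
      rw [shift_prod T hT0 A]
      rw [Finset.prod_insert (Finset.notMem_erase 0 S)]
      rw [digit_zero]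
    · have hbound : ∀ j ∈ S.image (· - 1), j < m := by
        intro j hj
        obtain ⟨i, hi, rfl⟩ := Finset.mem_image.mp hj
        have hi1 : 1 ≤ i := Nat.one_le_iff_ne_zero.mpr (fun h => h0 (h ▸ hi))
        have := hS i hi
        omega
      have hBmeas : MeasurableSet (⋂ j ∈ S.image (· - 1), lurothDigit j ⁻¹' A (j+1)) :=
        Finset.measurableSet_biInter _ fun j _ => measurable_lurothDigit j trivial
      rw [shift_iInter S h0 A, luroth_preserve hBmeas,
        ih (S.image (· - 1)) hbound (fun j => A (j+1)), shift_prod S h0 A]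

lemma lurothL_mem {u : ℝ} (hu : u ∈ Set.Ioc (0:ℝ) 1) : lurothL u ∈ Set.Ioc (0:ℝ) 1 := by
  obtain ⟨n, hn⟩ := exists_Jset hu
  rw [lurothL_eq hn]
  have h' : u ∈ (fun u : ℝ => (((n:ℝ)+1) * ((n:ℝ)+2)) * u + (-(((n:ℝ)+1)))) ⁻¹' Set.Ioc 0 1 := by
    rw [← Jset_eq_preimage]; exact hn
  exact h'

lemma iterate_mem (k : ℕ) {u : ℝ} (hu : u ∈ Set.Ioc (0:ℝ) 1) :
    lurothL^[k] u ∈ Set.Ioc (0:ℝ) 1 := by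
  induction k with
  | zero => simpa using hu
  | succ k ih => rw [Function.iterate_succ_apply']; exact lurothL_mem ih

lemma one_le_lurothN {u : ℝ} (hu : u ∈ Set.Ioc (0:ℝ) 1) : 1 ≤ lurothN u := by
  rw [lurothN, Int.le_floor]
  push_cast
  rw [le_div_iff₀ hu.1, one_mul]
  exact hu.2

/-- For `U` uniform on `(0,1]`, the Luroth digits `X_k(U) = N(L^{k-1}(U))` form an IID
sequence of positive-integer valued random variables with
`P(X_1 = n) = 1/(n(n+1))` for all `n ≥ 1`. -/
theorem lurothDigits_iid :
    iIndepFun lurothDigit (volume.restrict (Set.Ioc (0 : ℝ) 1)) ∧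
    (∀ k : ℕ,
      (volume.restrict (Set.Ioc (0 : ℝ) 1)) {u : ℝ | 1 ≤ lurothDigit k u} = 1) ∧
    (∀ k : ℕ, ∀ n : ℕ, 1 ≤ n →
      (volume.restrict (Set.Ioc (0 : ℝ) 1)) {u : ℝ | lurothDigit k u = (n : ℤ)}
        = ENNReal.ofReal (1 / (n * (n + 1)))) := by
  refine ⟨?_, ?_, ?_⟩
  · rw [iIndepFun_iff_measure_inter_preimage_eq_mul]
    intro S sets _
    rw [Measure.restrict_apply (Finset.measurableSet_biInter _
      fun i _ => measurable_lurothDigit i trivial)]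
    rw [luroth_prod (S.sup id + 1) S
      (fun i hi => Nat.lt_succ_of_le (Finset.le_sup (f := id) hi)) sets]
    exact Finset.prod_congr rfl fun i _ =>
      (Measure.restrict_apply (measurable_lurothDigit i trivial)).symm
  · intro k
    have hset1 : {u : ℝ | 1 ≤ lurothDigit k u} = lurothDigit k ⁻¹' {m : ℤ | 1 ≤ m} := rfl
    rw [hset1, Measure.restrict_apply (measurable_lurothDigit k trivial)]
    rw [← hset1]
    have hsub : Set.Ioc (0:ℝ) 1 ⊆ {u | 1 ≤ lurothDigit k u} := fun u hu =>
      one_le_lurothN (iterate_mem k hu)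
    rw [Set.inter_eq_self_of_subset_right hsub, vol_Ioc01]
  · intro k n hn
    have hset : {u : ℝ | lurothDigit k u = (n:ℤ)}
        = (lurothL^[k]) ⁻¹' (lurothN ⁻¹' {(n:ℤ)}) := rfl
    rw [hset, Measure.restrict_apply ((measurable_lurothL.iterate k) (measurable_lurothN trivial)),
      luroth_preserve_iter k (measurable_lurothN trivial)]
    have hJ : lurothN ⁻¹' {(n:ℤ)} ∩ Set.Ioc (0:ℝ) 1 = Jset (n-1) := by
      ext u
      constructor
      · rintro ⟨hA, hIoc⟩
        obtain ⟨m, hm⟩ := exists_Jset hIoc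
        have heq := lurothN_eq hm
        have hAn : lurothN u = (n:ℤ) := hA
        have hmn : m = n - 1 := by omega
        rw [← hmn]
        exact hm
      · intro hu
        refine ⟨?_, Jset_subset _ hu⟩
        have heq := lurothN_eq hu
        show lurothN u ∈ ({(n:ℤ)} : Set ℤ)
        rw [heq]
        simp only [Set.mem_singleton_iff]
        omega
    rw [hJ, vol_Jset]
    congr 1
    have hc : ((n-1 : ℕ):ℝ) = (n:ℝ) - 1 := by
      have := Nat.cast_sub (R := ℝ) hn
      simpa using this
    rw [hc]
    ring_nf
end

section
/- lim_{k → ∞} k (2^{k−1} + Σ_{j=2}^{k} T(k−1, k−j) ζ(j) (−1)^{j+1}) = 1, where ζ is the Riemann zeta function and T(l, j) = Σ_{i=0}^{j} C(l, i). -/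
open Finset Filter

def bernoulliTriangle (l j : ℕ) : ℕ := ∑ i ∈ Finset.range (j + 1), Nat.choose l i

lemma bt_succ_succ (l m : ℕ) :
    bernoulliTriangle (l+1) (m+1) = bernoulliTriangle l (m+1) + bernoulliTriangle l m := by
  unfold bernoulliTriangle
  rw [Finset.sum_range_succ' (fun i => Nat.choose (l+1) i),
      Finset.sum_range_succ' (fun i => Nat.choose l i)]
  simp only [Nat.choose_succ_succ, Nat.choose_zero_right]
  rw [Finset.sum_add_distrib]
  simp only [Nat.succ_eq_add_one]
  omega

lemma bt_self (l : ℕ) : bernoulliTriangle l l = 2^l := by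
  unfold bernoulliTriangle; rw [Nat.sum_range_choose]

lemma bt_zero (l : ℕ) : bernoulliTriangle l 0 = 1 := by
  simp [bernoulliTriangle]

lemma R_closed (x : ℂ) : ∀ n : ℕ, 1 ≤ n →
    (1+x) * ∑ j ∈ Icc 2 (n+1), (bernoulliTriangle n (n+1-j) : ℂ) * (-1)^(j+1) * x^j
      = x^2 * ((1-x)^n - 2^n) := by
  intro n hn
  induction n, hn using Nat.le_induction with
  | base =>
      simp [bt_zero]
      ring
  | succ n hn ih =>
      rw [Finset.sum_Icc_succ_top (by omega : 2 ≤ n+1+1)]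
      have hsplit : ∀ j ∈ Icc 2 (n+1),
          (bernoulliTriangle (n+1) (n+1+1-j) : ℂ) * (-1)^(j+1) * x^j
            = (bernoulliTriangle n (n+1-j+1) : ℂ) * (-1)^(j+1) * x^j
              + (bernoulliTriangle n (n+1-j) : ℂ) * (-1)^(j+1) * x^j := by
        intro j hj
        simp only [Finset.mem_Icc] at hj
        have h2 : n+1+1-j = (n+1-j)+1 := by omega
        rw [h2, bt_succ_succ]
        push_cast
        ring
      rw [Finset.sum_congr rfl hsplit, Finset.sum_add_distrib]
      -- reindex the first sum
      have hmap : Icc 2 (n+1) = (Icc 1 n).map (addRightEmbedding 1) := by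
        rw [Finset.map_add_right_Icc]
      have hA : ∑ j ∈ Icc 2 (n+1), (bernoulliTriangle n (n+1-j+1) : ℂ) * (-1)^(j+1) * x^j
          = ∑ i ∈ Icc 1 n, (bernoulliTriangle n (n+1-i) : ℂ) * (-1)^(i+1) * x^i * (-x) := by
        rw [hmap, Finset.sum_map]
        refine Finset.sum_congr rfl ?_
        intro i hi
        simp only [Finset.mem_Icc] at hi
        simp only [addRightEmbedding_apply]
        have h3 : n+1-(i+1)+1 = n+1-i := by omega
        rw [h3]
        ring
      rw [hA]
      -- peel bottom element i = 1
      have hpeel : ∑ i ∈ Icc 1 n, (bernoulliTriangle n (n+1-i) : ℂ) * (-1)^(i+1) * x^i * (-x)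
          = (bernoulliTriangle n n : ℂ) * (-1)^2 * x^1 * (-x)
            + ∑ i ∈ Icc 2 n, (bernoulliTriangle n (n+1-i) : ℂ) * (-1)^(i+1) * x^i * (-x) := by
        rw [← Finset.Ico_add_one_right_eq_Icc 1 n, Finset.sum_eq_sum_Ico_succ_bot (by omega : 1 < n+1),
            Finset.Ico_add_one_right_eq_Icc 2 n]
        norm_num
      rw [hpeel, bt_self]
      -- express Icc 2 n sum via IH sum (peel top of Icc 2 (n+1))
      have htop : ∑ j ∈ Icc 2 (n+1), (bernoulliTriangle n (n+1-j) : ℂ) * (-1)^(j+1) * x^j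
          = (∑ j ∈ Icc 2 n, (bernoulliTriangle n (n+1-j) : ℂ) * (-1)^(j+1) * x^j)
            + (bernoulliTriangle n 0 : ℂ) * (-1)^(n+1+1) * x^(n+1) := by
        rw [Finset.sum_Icc_succ_top (by omega : 2 ≤ n+1)]
        norm_num
      have hS2 : ∑ i ∈ Icc 2 n, (bernoulliTriangle n (n+1-i) : ℂ) * (-1)^(i+1) * x^i * (-x)
          = (-x) * ∑ i ∈ Icc 2 n, (bernoulliTriangle n (n+1-i) : ℂ) * (-1)^(i+1) * x^i := by
        rw [Finset.mul_sum]
        exact Finset.sum_congr rfl (fun i _ => by ring)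
      rw [hS2]
      have hbt0 : (bernoulliTriangle n 0 : ℂ) = 1 := by rw [bt_zero]; norm_num
      have hbtt : (bernoulliTriangle (n+1) (n+1+1-(n+1+1)) : ℂ) = 1 := by
        simp [bt_zero]
      rw [hbtt]
      have hSrw : ∑ i ∈ Icc 2 n, (bernoulliTriangle n (n+1-i) : ℂ) * (-1)^(i+1) * x^i
          = (∑ j ∈ Icc 2 (n+1), (bernoulliTriangle n (n+1-j) : ℂ) * (-1)^(j+1) * x^j)
            - (-1)^(n+1+1) * x^(n+1) := by
        rw [htop, hbt0]; ring
      rw [hSrw]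
      push_cast
      linear_combination (1 - x) * ih
lemma pow_sub_pow_ge (a b : ℝ) (ha : 0 ≤ a) (hab : a ≤ b) (k : ℕ) :
    (k : ℝ) * a^(k-1) * (b - a) ≤ b^k - a^k := by
  rcases Nat.eq_zero_or_pos k with rfl | hk
  · simp
  obtain ⟨m, rfl⟩ := Nat.exists_eq_add_of_le hk
  simp only [Nat.add_sub_cancel_left] at *
  have hgeom := geom_sum₂_mul (R := ℝ) b a (1 + m)
  have hb : 0 ≤ b := ha.trans hab
  have hble : ∀ i ∈ Finset.range (1+m), a^m ≤ b^i * a^(1+m-1-i) := by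
    intro i hi
    simp only [Finset.mem_range] at hi
    have h1 : a^i * a^(1+m-1-i) ≤ b^i * a^(1+m-1-i) :=
      mul_le_mul_of_nonneg_right (pow_le_pow_left₀ ha hab i) (pow_nonneg ha _)
    calc a^m = a^i * a^(1+m-1-i) := by rw [← pow_add]; congr 1; omega
    _ ≤ _ := h1
  have hsum : (1+m : ℝ) * a^m ≤ ∑ i ∈ Finset.range (1+m), b^i * a^(1+m-1-i) := by
    calc (1+m : ℝ) * a^m = ∑ i ∈ Finset.range (1+m), a^m := by
          rw [Finset.sum_const, Finset.card_range]; push_cast; ring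
    _ ≤ _ := Finset.sum_le_sum hble
  calc (↑(1+m) : ℝ) * a^m * (b - a) ≤ (∑ i ∈ Finset.range (1+m), b^i * a^(1+m-1-i)) * (b - a) := by
        apply mul_le_mul_of_nonneg_right _ (by linarith)
        push_cast at hsum ⊢; linarith
  _ = b^(1+m) - a^(1+m) := hgeom

lemma pow_sub_pow_le (a b : ℝ) (ha : 0 ≤ a) (hab : a ≤ b) (k : ℕ) :
    b^k - a^k ≤ (k : ℝ) * b^(k-1) * (b - a) := by
  rcases Nat.eq_zero_or_pos k with rfl | hk
  · simp
  obtain ⟨m, rfl⟩ := Nat.exists_eq_add_of_le hk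
  simp only [Nat.add_sub_cancel_left] at *
  have hgeom := geom_sum₂_mul (R := ℝ) b a (1 + m)
  have hb : 0 ≤ b := ha.trans hab
  have hble : ∀ i ∈ Finset.range (1+m), b^i * a^(1+m-1-i) ≤ b^m := by
    intro i hi
    simp only [Finset.mem_range] at hi
    calc b^i * a^(1+m-1-i) ≤ b^i * b^(1+m-1-i) :=
          mul_le_mul_of_nonneg_left (pow_le_pow_left₀ ha hab _) (pow_nonneg hb _)
    _ = b^m := by rw [← pow_add]; congr 1; omega
  have hsum : ∑ i ∈ Finset.range (1+m), b^i * a^(1+m-1-i) ≤ (1+m : ℝ) * b^m := by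
    calc ∑ i ∈ Finset.range (1+m), b^i * a^(1+m-1-i) ≤ ∑ i ∈ Finset.range (1+m), b^m :=
          Finset.sum_le_sum hble
    _ = (1+m:ℝ) * b^m := by rw [Finset.sum_const, Finset.card_range]; push_cast; ring
  calc b^(1+m) - a^(1+m) = (∑ i ∈ Finset.range (1+m), b^i * a^(1+m-1-i)) * (b - a) := hgeom.symm
  _ ≤ (↑(1+m) : ℝ) * b^m * (b - a) := by
        apply mul_le_mul_of_nonneg_right _ (by linarith)
        push_cast at hsum ⊢; linarith

noncomputable def uu (n : ℕ) : ℝ := n / (n + 1)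

lemma uu_nonneg (n : ℕ) : 0 ≤ uu n := by
  unfold uu; positivity

lemma uu_lt_one (n : ℕ) : uu n < 1 := by
  unfold uu
  rw [div_lt_one (by positivity)]
  linarith

lemma uu_mono (n : ℕ) : uu n ≤ uu (n+1) := by
  unfold uu
  rw [div_le_div_iff₀ (by positivity) (by positivity)]
  push_cast; nlinarith

lemma uu_zero : uu 0 = 0 := by simp [uu]

lemma uu_succ_sub (n : ℕ) : uu (n+1) - uu n = 1 / ((n+1)*(n+2)) := by
  unfold uu
  push_cast
  field_simp
  ring

lemma one_sub_uu (n : ℕ) : 1 - uu n = 1 / (n+1) := by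
  unfold uu; field_simp; ring

lemma uu_tendsto : Tendsto uu atTop (nhds 1) := by
  have h : uu = fun n : ℕ => 1 - 1/((n:ℝ)+1) := by
    funext n; rw [← one_sub_uu n]; ring
  rw [h]
  have := tendsto_one_div_add_atTop_nhds_zero_nat (𝕜 := ℝ)
  have h2 := Tendsto.const_sub (1:ℝ) this
  simpa using h2

-- key bound (iii): k x^(k-1) (1-x) ≤ 1 for 0 ≤ x ≤ 1
lemma k_pow_bound (x : ℝ) (hx : 0 ≤ x) (hx1 : x ≤ 1) (k : ℕ) :
    (k:ℝ) * x^(k-1) * (1 - x) ≤ 1 := by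
  have := pow_sub_pow_ge x 1 hx hx1 k
  have h1 : x^k ≥ 0 := pow_nonneg hx k
  simp only [one_pow] at this
  linarith

noncomputable def FF (k n : ℕ) : ℝ := (uu n)^(k-1) * (uu (n+1) - uu n)
noncomputable def DD (k n : ℕ) : ℝ := (uu (n+1))^k - (uu n)^k

lemma hasSum_tele (k : ℕ) (hk : 1 ≤ k) :
    HasSum (DD k) 1 := by
  unfold DD
  rw [hasSum_iff_tendsto_nat_of_nonneg]
  · have hps : ∀ N, ∑ n ∈ Finset.range N, ((uu (n+1))^k - (uu n)^k) = (uu N)^k := by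
      intro N
      rw [Finset.sum_range_sub (fun n => (uu n)^k)]
      rw [uu_zero, zero_pow (by omega), sub_zero]
    simp only [hps]
    have := (uu_tendsto.pow k)
    simpa using this
  · intro n
    have := pow_le_pow_left₀ (uu_nonneg n) (uu_mono n) k
    linarith

lemma FF_nonneg (k n : ℕ) : 0 ≤ FF k n :=
  mul_nonneg (pow_nonneg (uu_nonneg n) _) (by linarith [uu_mono n])

lemma DD_nonneg (k n : ℕ) : 0 ≤ DD k n := by
  have := pow_le_pow_left₀ (uu_nonneg n) (uu_mono n) k
  unfold DD; linarith

lemma DD_summable (k : ℕ) (hk : 1 ≤ k) : Summable (DD k) := (hasSum_tele k hk).summable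

lemma kFF_le_DD (k n : ℕ) : (k:ℝ) * FF k n ≤ DD k n := by
  have := pow_sub_pow_ge (uu n) (uu (n+1)) (uu_nonneg n) (uu_mono n) k
  unfold FF DD; nlinarith [this]

lemma DD_le (k n : ℕ) (hk : 1 ≤ k) : DD k n ≤ 1/((n:ℝ)+1) := by
  have h1 := pow_sub_pow_le (uu n) (uu (n+1)) (uu_nonneg n) (uu_mono n) k
  have h2 := k_pow_bound (uu (n+1)) (uu_nonneg _) (le_of_lt (uu_lt_one _)) k
  have h3 := one_sub_uu (n+1)
  have h4 := uu_succ_sub n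
  have h5 : (k:ℝ) * (uu (n+1))^(k-1) ≤ (n:ℝ)+2 := by
    have hcast : (1:ℝ) - uu (n+1) = 1/((n:ℝ)+2) := by rw [h3]; push_cast; ring
    rw [hcast] at h2
    have hpos : (0:ℝ) < (n:ℝ)+2 := by positivity
    have hmul := mul_le_mul_of_nonneg_right h2 (le_of_lt hpos)
    calc (k:ℝ)*(uu (n+1))^(k-1) = ((k:ℝ)*(uu (n+1))^(k-1) * (1/((n:ℝ)+2))) * ((n:ℝ)+2) := by
          field_simp
    _ ≤ 1 * ((n:ℝ)+2) := hmul
    _ = (n:ℝ)+2 := by ring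
  have h6 : 0 < ((n:ℝ)+1)*((n:ℝ)+2) := by positivity
  have h7 : DD k n ≤ (k:ℝ) * (uu (n+1))^(k-1) * (1/(((n:ℝ)+1)*((n:ℝ)+2))) := by
    unfold DD
    calc (uu (n+1))^k - (uu n)^k ≤ (k:ℝ) * (uu (n+1))^(k-1) * (uu (n+1) - uu n) := h1
    _ = (k:ℝ) * (uu (n+1))^(k-1) * (1/(((n:ℝ)+1)*((n:ℝ)+2))) := by rw [h4]
  have h8 : (k:ℝ) * (uu (n+1))^(k-1) * (1/(((n:ℝ)+1)*((n:ℝ)+2))) ≤ ((n:ℝ)+2) * (1/(((n:ℝ)+1)*((n:ℝ)+2))) := by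
    apply mul_le_mul_of_nonneg_right h5 (by positivity)
  have h9 : ((n:ℝ)+2) * (1/(((n:ℝ)+1)*((n:ℝ)+2))) = 1/((n:ℝ)+1) := by
    field_simp
  linarith

lemma kFF_summable (k : ℕ) (hk : 1 ≤ k) : Summable (fun n : ℕ => (k:ℝ) * FF k n) :=
  Summable.of_nonneg_of_le (fun n => mul_nonneg (by positivity) (FF_nonneg k n))
    (kFF_le_DD k) (DD_summable k hk)

lemma eps_summable (k : ℕ) (hk : 1 ≤ k) : Summable (fun n : ℕ => 2/((n:ℝ)+3) * DD k n) := by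
  apply Summable.of_nonneg_of_le (fun n => mul_nonneg (by positivity) (DD_nonneg k n))
    (fun n => ?_) ((DD_summable k hk).mul_left 2)
  have : 2/((n:ℝ)+3) ≤ 2 := by
    rw [div_le_iff₀ (by positivity)]; nlinarith
  calc 2/((n:ℝ)+3) * DD k n ≤ 2 * DD k n :=
    mul_le_mul_of_nonneg_right this (DD_nonneg k n)
  _ = _ := rfl

lemma bound_summable : Summable (fun n : ℕ => 2/(((n:ℝ)+1)*((n:ℝ)+3))) := by
  have h0 : Summable (fun n : ℕ => 1/(n:ℝ)^2) := (Real.summable_one_div_nat_pow (p := 2)).mpr (by norm_num)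
  have h1 : Summable (fun n : ℕ => 1/((n:ℝ)+1)^2) := by
    have := (summable_nat_add_iff (f := fun n : ℕ => 1/(n:ℝ)^2) 1).mpr h0
    simpa using this
  apply Summable.of_nonneg_of_le (fun n => by positivity) (fun n => ?_) (h1.mul_left 2)
  have hle : ((n:ℝ)+1)^2 ≤ ((n:ℝ)+1)*((n:ℝ)+3) := by nlinarith [Nat.cast_nonneg (α := ℝ) n]
  calc 2/(((n:ℝ)+1)*((n:ℝ)+3)) ≤ 2/((n:ℝ)+1)^2 :=
    div_le_div_of_nonneg_left (by norm_num) (by positivity) hle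
  _ = 2 * (1/((n:ℝ)+1)^2) := by ring

lemma eps_tendsto : Tendsto (fun k => ∑' (n : ℕ), 2/((n:ℝ)+3) * DD k n) atTop (nhds 0) := by
  have h := tendsto_tsum_of_dominated_convergence (𝓕 := atTop) (f := fun (k : ℕ) (n : ℕ) => 2/((n:ℝ)+3) * DD k n)
    (g := fun _ : ℕ => (0:ℝ)) (bound := fun n => 2/(((n:ℝ)+1)*((n:ℝ)+3))) bound_summable ?_ ?_
  · simpa using h
  · intro n
    have h0 : Tendsto (fun k : ℕ => (uu (n+1))^k) atTop (nhds 0) :=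
      tendsto_pow_atTop_nhds_zero_of_lt_one (uu_nonneg _) (uu_lt_one _)
    have h1 : Tendsto (fun k : ℕ => (uu n)^k) atTop (nhds 0) :=
      tendsto_pow_atTop_nhds_zero_of_lt_one (uu_nonneg _) (uu_lt_one _)
    have := ((h0.sub h1).const_mul (2/((n:ℝ)+3)))
    simpa [DD] using this
  · filter_upwards [eventually_ge_atTop 1] with k hk
    intro n
    have hD := DD_le k n hk
    have hDn := DD_nonneg k n
    rw [Real.norm_eq_abs, abs_of_nonneg (mul_nonneg (by positivity) hDn)]
    calc 2/((n:ℝ)+3) * DD k n ≤ 2/((n:ℝ)+3) * (1/((n:ℝ)+1)) :=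
      mul_le_mul_of_nonneg_left hD (by positivity)
    _ = 2/(((n:ℝ)+1)*((n:ℝ)+3)) := by field_simp

lemma FF_zero (k : ℕ) (hk : 2 ≤ k) : FF k 0 = 0 := by
  unfold FF; rw [uu_zero, zero_pow (by omega), zero_mul]

lemma SR_tendsto : Tendsto (fun k : ℕ => ∑' (n:ℕ), (k:ℝ) * FF k n) atTop (nhds 1) := by
  apply tendsto_of_tendsto_of_tendsto_of_le_of_le'
    (g := fun k : ℕ => 1 - ∑' (n:ℕ), 2/((n:ℝ)+3) * DD k n) (h := fun _ : ℕ => (1:ℝ))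
  · have := (tendsto_const_nhds (x := (1:ℝ)) (f := atTop (α := ℕ))).sub eps_tendsto
    simpa using this
  · exact tendsto_const_nhds
  · -- lower bound, for k ≥ 2
    filter_upwards [eventually_ge_atTop 2] with k hk
    have hk1 : 1 ≤ k := by omega
    have hs1 : Summable (fun n : ℕ => DD k n - 2/((n:ℝ)+3) * DD k n) :=
      (DD_summable k hk1).sub (eps_summable k hk1)
    have hs2 : Summable (fun n : ℕ => (k:ℝ) * FF k (n+1)) :=
      (summable_nat_add_iff 1).mpr (kFF_summable k hk1)
    have hshift : ∑' (n:ℕ), (k:ℝ) * FF k n = ∑' (n:ℕ), (k:ℝ) * FF k (n+1) := by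
      rw [Summable.tsum_eq_zero_add (kFF_summable k hk1), FF_zero k hk]
      simp
    have hpt : ∀ n : ℕ, DD k n - 2/((n:ℝ)+3) * DD k n ≤ (k:ℝ) * FF k (n+1) := by
      intro n
      have hle := pow_sub_pow_le (uu n) (uu (n+1)) (uu_nonneg n) (uu_mono n) k
      have hc : (0:ℝ) ≤ 1 - 2/((n:ℝ)+3) := by
        rw [sub_nonneg, div_le_one (by positivity)]; linarith [Nat.cast_nonneg (α := ℝ) n]
      have h1 : (1 - 2/((n:ℝ)+3)) * DD k n
          ≤ (1 - 2/((n:ℝ)+3)) * ((k:ℝ) * (uu (n+1))^(k-1) * (uu (n+1) - uu n)) := by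
        apply mul_le_mul_of_nonneg_left _ hc
        unfold DD; exact hle
      have h2 : (1 - 2/((n:ℝ)+3)) * ((k:ℝ) * (uu (n+1))^(k-1) * (uu (n+1) - uu n))
          = (k:ℝ) * FF k (n+1) := by
        unfold FF
        rw [uu_succ_sub n, uu_succ_sub (n+1)]
        push_cast
        have hA : ((n:ℝ)+1) ≠ 0 := by positivity
        have hB : ((n:ℝ)+2) ≠ 0 := by positivity
        have hC : ((n:ℝ)+3) ≠ 0 := by positivity
        field_simp
        ring
      nlinarith [h1, h2]
    calc 1 - ∑' (n:ℕ), 2/((n:ℝ)+3) * DD k n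
        = ∑' (n:ℕ), (DD k n - 2/((n:ℝ)+3) * DD k n) := by
          rw [Summable.tsum_sub (DD_summable k hk1) (eps_summable k hk1),
              (hasSum_tele k hk1).tsum_eq]
    _ ≤ ∑' (n:ℕ), (k:ℝ) * FF k (n+1) := Summable.tsum_le_tsum hpt hs1 hs2
    _ = ∑' (n:ℕ), (k:ℝ) * FF k n := hshift.symm
  · -- upper bound, for k ≥ 1
    filter_upwards [eventually_ge_atTop 1] with k hk
    calc ∑' (n:ℕ), (k:ℝ) * FF k n ≤ ∑' (n:ℕ), DD k n :=
      Summable.tsum_le_tsum (kFF_le_DD k) (kFF_summable k hk) (DD_summable k hk)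
    _ = 1 := (hasSum_tele k hk).tsum_eq

noncomputable def gR (k m : ℕ) : ℝ := (((m:ℝ)-1)/m)^(k-1) * (1/((m:ℝ)*((m:ℝ)+1)))

lemma gR_zero (k : ℕ) : gR k 0 = 0 := by simp [gR]

lemma gR_succ (k n : ℕ) : gR k (n+1) = FF k n := by
  unfold gR FF
  rw [uu_succ_sub n]
  unfold uu
  push_cast
  ring_nf

lemma FF_summable (k : ℕ) : Summable (FF k) := by
  apply Summable.of_nonneg_of_le (FF_nonneg k) (fun n => ?_) (DD_summable 1 le_rfl)
  have h1 : (uu n)^(k-1) ≤ 1 := pow_le_one₀ (uu_nonneg n) (uu_lt_one n).le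
  have h2 : 0 ≤ uu (n+1) - uu n := by linarith [uu_mono n]
  have h3 : DD 1 n = uu (n+1) - uu n := by unfold DD; simp
  rw [h3]
  unfold FF
  nlinarith

lemma gR_summable (k : ℕ) : Summable (gR k) := by
  rw [← summable_nat_add_iff 1]
  exact Summable.congr (FF_summable k) (fun n => (gR_succ k n).symm)

lemma gR_tsum (k : ℕ) : ∑' (m:ℕ), gR k m = ∑' (n:ℕ), FF k n := by
  rw [Summable.tsum_eq_zero_add (gR_summable k), gR_zero]
  simp only [gR_succ, zero_add]

lemma hasSum_c : HasSum (fun m : ℕ => 1/((m:ℝ)*((m:ℝ)+1))) 1 := by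
  have h := hasSum_tele 1 le_rfl
  have key : ∀ n:ℕ, 1/(((n+1:ℕ):ℝ)*(((n+1:ℕ):ℝ)+1)) = DD 1 n := by
    intro n
    have hD : DD 1 n = uu (n+1) - uu n := by unfold DD; simp
    rw [hD, uu_succ_sub n]
    push_cast
    ring
  have h2 : HasSum (fun n : ℕ => 1/(((n+1:ℕ):ℝ)*(((n+1:ℕ):ℝ)+1))) 1 := by
    have e : (fun n : ℕ => 1/(((n+1:ℕ):ℝ)*(((n+1:ℕ):ℝ)+1))) = DD 1 := funext key
    rw [e]; exact h
  rw [← hasSum_nat_add_iff' 1]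
  simpa using h2

lemma hasSum_cC : HasSum (fun m : ℕ => 1/((m:ℂ)*((m:ℂ)+1))) 1 := by
  have h := Complex.hasSum_ofReal.mpr hasSum_c
  have h2 : (fun m:ℕ => ((1/((m:ℝ)*((m:ℝ)+1)):ℝ):ℂ)) = (fun m:ℕ => 1/((m:ℂ)*((m:ℂ)+1))) := by
    funext m; push_cast; ring
  rw [h2] at h
  simpa using h

lemma hpoint (k : ℕ) (hk : 2 ≤ k) (m : ℕ) :
    ∑ j ∈ Icc 2 k, (bernoulliTriangle (k-1) (k-j) : ℂ) * (1/(m:ℂ)^j) * (-1)^(j+1)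
      = ((gR k m : ℝ) : ℂ) - (2:ℂ)^(k-1) * (1/((m:ℂ)*((m:ℂ)+1))) := by
  have hR := R_closed (1/(m:ℂ)) (k-1) (by omega)
  have hkk : k - 1 + 1 = k := by omega
  rw [hkk] at hR
  have hxne : (1:ℂ) + 1/(m:ℂ) ≠ 0 := by
    have he : (1:ℂ) + 1/(m:ℂ) = ((1 + 1/(m:ℝ) : ℝ) : ℂ) := by push_cast; ring
    rw [he]
    exact Complex.ofReal_ne_zero.mpr (by positivity)
  have hsum_eq : ∑ j ∈ Icc 2 k, (bernoulliTriangle (k-1) (k-j) : ℂ) * (1/(m:ℂ)^j) * (-1)^(j+1)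
      = ∑ j ∈ Icc 2 k, (bernoulliTriangle (k-1) (k-j) : ℂ) * (-1)^(j+1) * (1/(m:ℂ))^j := by
    refine Finset.sum_congr rfl (fun j _ => ?_)
    rw [one_div_pow]
    ring
  rw [hsum_eq]
  have hS : ∑ j ∈ Icc 2 k, (bernoulliTriangle (k-1) (k-j) : ℂ) * (-1)^(j+1) * (1/(m:ℂ))^j
      = (1/(m:ℂ))^2 * ((1-1/(m:ℂ))^(k-1) - 2^(k-1)) / (1 + 1/(m:ℂ)) := by
    rw [eq_div_iff hxne]
    linear_combination hR
  rw [hS]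
  rcases Nat.eq_zero_or_pos m with rfl | hm
  · simp [gR]
  · have hm0 : (m:ℂ) ≠ 0 := Nat.cast_ne_zero.mpr (by omega)
    have hm1 : (m:ℂ)+1 ≠ 0 := by
      have : ((m+1:ℕ):ℂ) ≠ 0 := Nat.cast_ne_zero.mpr (by omega)
      push_cast at this
      exact this
    have hmR : (m:ℝ) ≠ 0 := Nat.cast_ne_zero.mpr (by omega)
    have hmR1 : (m:ℝ)+1 ≠ 0 := by positivity
    have hgR : ((gR k m : ℝ) : ℂ) = (((m:ℂ)-1)/m)^(k-1) * (1/((m:ℂ)*((m:ℂ)+1))) := by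
      unfold gR
      push_cast
      ring
    rw [hgR]
    have h1x : (1:ℂ) - 1/(m:ℂ) = ((m:ℂ)-1)/m := by field_simp
    rw [h1x]
    field_simp

lemma E_eq (k : ℕ) (hk : 2 ≤ k) :
    (2:ℂ)^(k-1) + ∑ j ∈ Icc 2 k,
        (bernoulliTriangle (k-1) (k-j) : ℂ) * riemannZeta j * (-1)^(j+1)
      = ((∑' (n:ℕ), FF k n : ℝ) : ℂ) := by
  have hz : ∀ j ∈ Icc 2 k, (bernoulliTriangle (k-1) (k-j) : ℂ) * riemannZeta j * (-1)^(j+1)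
      = ∑' (m:ℕ), (bernoulliTriangle (k-1) (k-j) : ℂ) * (1/(m:ℂ)^j) * (-1)^(j+1) := by
    intro j hj
    simp only [Finset.mem_Icc] at hj
    rw [zeta_nat_eq_tsum_of_gt_one (by omega : 1 < j), ← tsum_mul_left, ← tsum_mul_right]
  rw [Finset.sum_congr rfl hz]
  have hbase : ∀ j, 2 ≤ j → Summable (fun m : ℕ => 1/(m:ℂ)^j) := by
    intro j hj
    apply Summable.of_norm
    have h := Real.summable_one_div_nat_pow.mpr (by omega : 1 < j)
    apply h.congr
    intro m
    simp [norm_div, norm_pow]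
  have hsm : ∀ j ∈ Icc 2 k,
      Summable (fun m : ℕ => (bernoulliTriangle (k-1) (k-j) : ℂ) * (1/(m:ℂ)^j) * (-1)^(j+1)) := by
    intro j hj
    simp only [Finset.mem_Icc] at hj
    exact ((hbase j hj.1).mul_left _).mul_right _
  rw [← Summable.tsum_finsetSum hsm]
  rw [tsum_congr (fun m => hpoint k hk m)]
  have hsum1 : Summable (fun m : ℕ => ((gR k m : ℝ) : ℂ)) := by
    have := (gR_summable k).hasSum
    exact (Complex.hasSum_ofReal.mpr this).summable
  have hsum2 : Summable (fun m : ℕ => (2:ℂ)^(k-1) * (1/((m:ℂ)*((m:ℂ)+1)))) :=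
    hasSum_cC.summable.mul_left _
  rw [Summable.tsum_sub hsum1 hsum2, tsum_mul_left, hasSum_cC.tsum_eq, ← Complex.ofReal_tsum, gR_tsum]
  ring

/-- `lim_{k → ∞} k (2^{k-1} + ∑_{j=2}^{k} T(k-1, k-j) ζ(j) (-1)^{j+1}) = 1`,
where `ζ` is the Riemann zeta function. -/
theorem tendsto_k_zeta_combination :
    Filter.Tendsto
      (fun k : ℕ => (k : ℂ) * (2 ^ (k - 1)
          + ∑ j ∈ Finset.Icc 2 k,
              (bernoulliTriangle (k - 1) (k - j) : ℂ) * riemannZeta j * (-1) ^ (j + 1)))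
      Filter.atTop (nhds 1) := by
  have h1 : Tendsto (fun k : ℕ => (((∑' (n:ℕ), (k:ℝ) * FF k n) : ℝ) : ℂ)) atTop (nhds 1) := by
    have h := (Complex.continuous_ofReal.tendsto 1).comp SR_tendsto
    simpa [Function.comp_def] using h
  apply h1.congr'
  filter_upwards [eventually_ge_atTop 2] with k hk
  rw [E_eq k hk, tsum_mul_left]
  push_cast
  ring
end

section
/- Let X_1, X_2, … be an IID sequence of random variables with the Luroth distribution, S_k = X_1 + … + X_k, and M_k = max(X_1, …, X_k). Then (S_k − M_k)/(k log k) converges to 1 in probability: for every ε > 0, lim_{k → ∞} P(|(S_k − M_k)/(k log k) − 1| > ε) = 0. -/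
open MeasureTheory ProbabilityTheory Finset

/-- partial sums of the Luroth pmf -/
lemma luroth_aux_sum_pmf (n : ℕ) :
    ∑ m ∈ Finset.range n, (1:ℝ)/((m+1)*(m+2)) = n/(n+1) := by
  induction n with
  | zero => simp
  | succ n ih =>
    rw [Finset.sum_range_succ, ih]
    have h1 : ((n:ℝ)+1) ≠ 0 := by positivity
    have h2 : ((n:ℝ)+2) ≠ 0 := by positivity
    push_cast
    field_simp
    ring

lemma luroth_aux_log_diff_le (x : ℝ) (hx : 0 < x) :
    Real.log (x+1) - Real.log x ≤ 1/x := by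
  have h := Real.log_le_sub_one_of_pos (show 0 < (x+1)/x by positivity)
  rw [Real.log_div (by positivity) (by positivity)] at h
  have : (x+1)/x - 1 = 1/x := by field_simp; ring
  linarith [h, this.le]

lemma luroth_aux_le_log_diff (x : ℝ) (hx : 0 < x) :
    1/(x+1) ≤ Real.log (x+1) - Real.log x := by
  have h := Real.log_le_sub_one_of_pos (show 0 < x/(x+1) by positivity)
  rw [Real.log_div (by positivity) (by positivity)] at h
  have : x/(x+1) - 1 = -(1/(x+1)) := by field_simp; ring
  linarith

noncomputable def lurothT (c : ℕ) : ℝ := ∑ n ∈ Finset.range c, (1:ℝ)/(n+2)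

lemma lurothT_le (c : ℕ) : lurothT c ≤ Real.log (c+1) := by
  induction c with
  | zero => simp [lurothT]
  | succ c ih =>
    rw [lurothT, Finset.sum_range_succ, ← lurothT]
    have h := luroth_aux_le_log_diff ((c:ℝ)+1) (by positivity)
    push_cast
    have h3 : (c:ℝ)+1+1 = (c:ℝ)+2 := by ring
    rw [h3] at h ⊢
    linarith

lemma le_lurothT (c : ℕ) : Real.log (c+2) - Real.log 2 ≤ lurothT c := by
  induction c with
  | zero => simp [lurothT]
  | succ c ih =>
    rw [lurothT, Finset.sum_range_succ, ← lurothT]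
    have h := luroth_aux_log_diff_le ((c:ℝ)+2) (by positivity)
    push_cast
    have : (c:ℝ)+2+1 = (c:ℝ)+1+2 := by ring
    rw [this] at h
    linarith

/-- Key identity: sum of single-fiber indicators of a truncation -/
lemma luroth_aux_trunc_sum (f : ℕ → ℝ) (c m : ℕ) :
    ∑ n ∈ Finset.range c, (if m = n+1 then f (n+1) else 0)
      = if 1 ≤ m ∧ m ≤ c then f m else 0 := by
  by_cases h : 1 ≤ m ∧ m ≤ c
  · obtain ⟨h1, h2⟩ := h
    obtain ⟨p, rfl⟩ : ∃ p, m = p + 1 := ⟨m-1, by omega⟩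
    rw [if_pos ⟨h1, h2⟩]
    rw [Finset.sum_eq_single_of_mem (f := fun n => if p+1 = n+1 then f (n+1) else 0) p
      (Finset.mem_range.mpr (by omega)) (fun n _ hne => if_neg (by omega)), if_pos rfl]
  · rw [if_neg h]
    apply Finset.sum_eq_zero
    intro n hn
    rw [if_neg]
    rintro rfl
    exact h ⟨Nat.succ_le_succ (Nat.zero_le n), Finset.mem_range.mp hn⟩

lemma luroth_tail {Ω : Type*} [MeasurableSpace Ω] (μ : Measure Ω) [IsProbabilityMeasure μ]
    (X : Ω → ℕ) (hm : Measurable X)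
    (hd : ∀ n : ℕ, 1 ≤ n → μ {ω | X ω = n} = ENNReal.ofReal (1 / (n * (n + 1))))
    (n : ℕ) : μ {ω | n < X ω} ≤ ENNReal.ofReal (1/(n+1)) := by
  have hmeasn : ∀ m : ℕ, MeasurableSet {ω | X ω = m} := fun m => hm (measurableSet_singleton m)
  have hsub : (⋃ m ∈ Finset.range n, {ω | X ω = m+1}) ⊆ {ω | X ω ≤ n} := by
    intro ω hω
    simp only [Set.mem_iUnion, Finset.mem_range, Set.mem_setOf_eq] at hω ⊢
    obtain ⟨m, hm1, hm2⟩ := hω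
    omega
  have hdisj : (↑(Finset.range n) : Set ℕ).PairwiseDisjoint fun m => {ω | X ω = m+1} := by
    intro a _ b _ hab
    apply Set.disjoint_left.mpr
    intro ω h1 h2
    simp only [Set.mem_setOf_eq] at h1 h2
    omega
  have hU : ENNReal.ofReal ((n:ℝ)/(n+1)) ≤ μ {ω | X ω ≤ n} := by
    refine le_trans (le_of_eq ?_) (le_trans (le_of_eq (measure_biUnion_finset hdisj
      (fun m _ => hmeasn (m+1))).symm) (measure_mono hsub))
    rw [← luroth_aux_sum_pmf n, ENNReal.ofReal_sum_of_nonneg (fun m _ => by positivity)]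
    refine (Finset.sum_congr rfl fun m _ => ?_)
    rw [hd (m+1) (by omega)]
    congr 1
    push_cast
    ring
  have hcompl : {ω | n < X ω} = {ω | X ω ≤ n}ᶜ := by
    ext ω; simp [not_le]
  rw [hcompl, measure_compl (by exact hm measurableSet_Iic) (measure_ne_top μ _),
    measure_univ]
  calc 1 - μ {ω | X ω ≤ n} ≤ 1 - ENNReal.ofReal ((n:ℝ)/(n+1)) := tsub_le_tsub_left hU 1
    _ = ENNReal.ofReal (1/(n+1)) := by
        rw [← ENNReal.ofReal_one, ← ENNReal.ofReal_sub _ (by positivity)]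
        congr 1
        have : ((n:ℝ)+1) ≠ 0 := by positivity
        field_simp
        ring

lemma luroth_integral {Ω : Type*} [MeasurableSpace Ω] (μ : Measure Ω) [IsProbabilityMeasure μ]
    (X : Ω → ℕ) (hm : Measurable X)
    (hd : ∀ n : ℕ, 1 ≤ n → μ {ω | X ω = n} = ENNReal.ofReal (1 / (n * (n + 1))))
    (f : ℕ → ℝ) (c : ℕ) :
    ∫ ω, (∑ n ∈ Finset.range c, if X ω = n+1 then f (n+1) else 0) ∂μ
      = ∑ n ∈ Finset.range c, f (n+1) * (1/((n+1)*(n+2))) := by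
  have hind : ∀ n : ℕ, (fun ω => if X ω = n+1 then f (n+1) else 0)
      = Set.indicator {ω | X ω = n+1} (fun _ => f (n+1)) := by
    intro n; funext ω; rw [Set.indicator_apply]; rfl
  have hmeasn : ∀ n : ℕ, MeasurableSet {ω | X ω = n+1} :=
    fun n => hm (measurableSet_singleton _)
  have hint : ∀ n : ℕ, Integrable (fun ω => if X ω = n+1 then f (n+1) else 0) μ := by
    intro n; rw [hind n]; exact (integrable_const _).indicator (hmeasn n)
  rw [integral_finset_sum _ (fun n _ => hint n)]
  refine Finset.sum_congr rfl fun n _ => ?_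
  rw [hind n, integral_indicator_const _ (hmeasn n), measureReal_def, hd (n+1) (by omega),
    ENNReal.toReal_ofReal (by positivity), smul_eq_mul]
  push_cast
  ring

/-- For an IID sequence `X_1, X_2, …` with the Luroth distribution
`P(X = n) = 1/(n(n+1))`, `S_k = X_1 + ⋯ + X_k` and `M_k = max(X_1, …, X_k)`, the
trimmed sum `(S_k - M_k)/(k log k)` tends to `1` in probability: for every `ε > 0`,
`P(|(S_k - M_k)/(k log k) - 1| > ε) → 0`. -/
theorem trimmed_sum_tendsto_one_in_probability
    {Ω : Type*} [MeasurableSpace Ω] (μ : Measure Ω) [IsProbabilityMeasure μ]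
    (X : ℕ → Ω → ℕ) (hmeas : ∀ i, Measurable (X i))
    (hindep : iIndepFun X μ)
    (hdist : ∀ i, ∀ n : ℕ, 1 ≤ n →
      μ {ω | X i ω = n} = ENNReal.ofReal (1 / (n * (n + 1))))
    (ε : ℝ) (hε : 0 < ε) :
    Filter.Tendsto
      (fun k : ℕ =>
        (μ {ω | ε < |(((∑ i ∈ Finset.range k, X i ω : ℕ) : ℝ)
              - (((Finset.range k).sup fun j => X j ω : ℕ) : ℝ))
            / (k * Real.log k) - 1|}).toReal)
      Filter.atTop (nhds 0) := by
  classical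
  set C₀ : ℝ := 2/ε + 1 + 16/ε^2 with hC₀
  have hC₀pos : 0 < C₀ := by positivity
  have hlim : Filter.Tendsto (fun k : ℕ => C₀ / Real.log k) Filter.atTop (nhds 0) :=
    Filter.Tendsto.div_atTop tendsto_const_nhds
      (Real.tendsto_log_atTop.comp tendsto_natCast_atTop_atTop)
  refine squeeze_zero' (Filter.Eventually.of_forall fun k => ENNReal.toReal_nonneg) ?_ hlim
  -- eventual smallness of log 2 + log log k
  have hsm0 : Filter.Tendsto
      (fun k : ℕ => (Real.log 2 + Real.log (Real.log k)) / Real.log k)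
      Filter.atTop (nhds 0) := by
    have h2 : Filter.Tendsto (fun x : ℝ => Real.log 2 / x + Real.log x / x)
        Filter.atTop (nhds 0) := by
      have ha := Real.isLittleO_log_id_atTop.tendsto_div_nhds_zero
      have hb : Filter.Tendsto (fun x : ℝ => Real.log 2 / x) Filter.atTop (nhds 0) :=
        Filter.Tendsto.div_atTop tendsto_const_nhds Filter.tendsto_id
      simpa using hb.add ha
    have h3 := h2.comp (Real.tendsto_log_atTop.comp
      (tendsto_natCast_atTop_atTop (R := ℝ)))
    refine h3.congr fun k => ?_
    simp only [Function.comp_apply, ← add_div]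
  have hsm1 : ∀ᶠ k : ℕ in Filter.atTop,
      (Real.log 2 + Real.log (Real.log k)) / Real.log k < ε/4 :=
    hsm0.eventually (gt_mem_nhds (by positivity))
  filter_upwards [hsm1, Filter.eventually_ge_atTop 3] with k hsm hk3
  -- fixed k now
  have hk3' : (3:ℝ) ≤ (k:ℝ) := by exact_mod_cast hk3
  have hkpos : (0:ℝ) < k := by linarith
  have hlog1 : 1 ≤ Real.log k := by
    rw [Real.le_log_iff_exp_le (by linarith)]
    calc Real.exp 1 ≤ 2.7182818286 := Real.exp_one_lt_d9.le
      _ ≤ (k:ℝ) := by linarith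
  have hlogpos : (0:ℝ) < Real.log k := by linarith
  set L : ℝ := (k:ℝ) * Real.log k with hLdef
  have hLk : (k:ℝ) ≤ L := le_mul_of_one_le_right hkpos.le hlog1
  have hL3 : (3:ℝ) ≤ L := le_trans hk3' hLk
  have hLpos : (0:ℝ) < L := by linarith
  set c : ℕ := ⌊L⌋₊ with hcdef
  have hcle : (c:ℝ) ≤ L := Nat.floor_le hLpos.le
  have hclt : L < (c:ℝ) + 1 := Nat.lt_floor_add_one L
  have hloglog : 0 ≤ Real.log (Real.log k) := Real.log_nonneg hlog1
  have hlogL : Real.log L = Real.log k + Real.log (Real.log k) := by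
    rw [hLdef, Real.log_mul (ne_of_gt hkpos) (ne_of_gt hlogpos)]
  -- bounds on lurothT c
  have hTub : lurothT c ≤ Real.log 2 + Real.log k + Real.log (Real.log k) := by
    refine (lurothT_le c).trans ?_
    have h1 : (c:ℝ) + 1 ≤ 2 * L := by linarith
    calc Real.log ((c:ℝ)+1) ≤ Real.log (2*L) := Real.log_le_log (by positivity) h1
      _ = Real.log 2 + Real.log k + Real.log (Real.log k) := by
          rw [Real.log_mul two_ne_zero (ne_of_gt hLpos), hlogL]; ring
  have hTlb : Real.log k - Real.log 2 ≤ lurothT c := by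
    refine le_trans ?_ (le_lurothT c)
    have h1 : L ≤ (c:ℝ) + 2 := by linarith
    have h2 : Real.log L ≤ Real.log ((c:ℝ)+2) := Real.log_le_log hLpos h1
    linarith
  have hsm' : Real.log 2 + Real.log (Real.log k) ≤ ε/4 * Real.log k := by
    rw [div_lt_iff₀ hlogpos] at hsm
    linarith
  have hT : |lurothT c - Real.log k| ≤ ε/4 * Real.log k := by
    rw [abs_le]
    have hlog2 : 0 < Real.log 2 := Real.log_pos (by norm_num)
    constructor <;> [skip; skip] <;> nlinarith [hTub, hTlb, hsm', hloglog, hlog2]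
  -- truncated variables
  set Y : ℕ → Ω → ℝ := fun i ω => if 1 ≤ X i ω ∧ X i ω ≤ c then (X i ω : ℝ) else 0 with hYdef
  have hYsum : ∀ i, Y i = fun ω =>
      ∑ n ∈ Finset.range c, if X i ω = n+1 then ((n+1:ℕ):ℝ) else 0 := by
    intro i
    funext ω
    exact (luroth_aux_trunc_sum (fun n => (n:ℝ)) c (X i ω)).symm
  have hYmeas : ∀ i, Measurable (Y i) := fun i =>
    (Measurable.of_discrete (f := fun m : ℕ => if 1 ≤ m ∧ m ≤ c then (m:ℝ) else 0)).comp
      (hmeas i)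
  have hYbd : ∀ i ω, |Y i ω| ≤ (c:ℝ) := by
    intro i ω
    simp only [hYdef]
    split_ifs with h
    · rw [abs_of_nonneg (Nat.cast_nonneg _)]
      exact_mod_cast h.2
    · simp
  have hY2 : ∀ i, MemLp (Y i) 2 μ := fun i =>
    MemLp.of_bound (hYmeas i).aestronglyMeasurable (c:ℝ)
      (Filter.Eventually.of_forall fun ω => by
        rw [Real.norm_eq_abs]; exact hYbd i ω)
  -- expectations
  have hEY : ∀ i, ∫ ω, Y i ω ∂μ = lurothT c := by
    intro i
    rw [hYsum i, luroth_integral μ (X i) (hmeas i) (hdist i) (fun n => (n:ℝ)) c, lurothT]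
    refine Finset.sum_congr rfl fun n _ => ?_
    have h1 : ((n:ℝ)+1) ≠ 0 := by positivity
    have h2 : ((n:ℝ)+2) ≠ 0 := by positivity
    push_cast
    field_simp
  set V : ℝ := ∑ n ∈ Finset.range c, ((n:ℝ)+1)/((n:ℝ)+2) with hVdef
  have hEY2 : ∀ i, ∫ ω, (Y i ω)^2 ∂μ = V := by
    intro i
    have hfun : (fun ω => (Y i ω)^2) = fun ω =>
        ∑ n ∈ Finset.range c, if X i ω = n+1 then ((n+1:ℕ):ℝ)^2 else 0 := by
      funext ω
      have h1 : (Y i ω)^2 = if 1 ≤ X i ω ∧ X i ω ≤ c then ((X i ω : ℕ):ℝ)^2 else 0 := by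
        simp only [hYdef]
        split_ifs <;> simp
      rw [h1]
      exact (luroth_aux_trunc_sum (fun n => (n:ℝ)^2) c (X i ω)).symm
    rw [hfun, luroth_integral μ (X i) (hmeas i) (hdist i) (fun n => (n:ℝ)^2) c, hVdef]
    refine Finset.sum_congr rfl fun n _ => ?_
    have h1 : ((n:ℝ)+1) ≠ 0 := by positivity
    have h2 : ((n:ℝ)+2) ≠ 0 := by positivity
    push_cast
    field_simp
  have hVle : V ≤ (c:ℝ) := by
    rw [hVdef]
    calc ∑ n ∈ Finset.range c, ((n:ℝ)+1)/((n:ℝ)+2)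
        ≤ ∑ n ∈ Finset.range c, (1:ℝ) :=
          Finset.sum_le_sum fun n _ => by
            rw [div_le_one (by positivity)]; linarith
      _ = (c:ℝ) := by simp
  have hVarY : ∀ i, variance (Y i) μ ≤ (c:ℝ) := by
    intro i
    rw [variance_eq_sub (hY2 i)]
    have h2 : μ[(Y i)^2] = V := by
      rw [← hEY2 i]
      congr 1
    have h3 : (0:ℝ) ≤ (∫ ω, Y i ω ∂μ) ^ 2 := sq_nonneg _
    have h4 : μ[Y i] ^ 2 = (∫ ω, Y i ω ∂μ) ^ 2 := rfl
    rw [h4]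
    linarith
  -- the sum
  set S' : Ω → ℝ := ∑ i ∈ Finset.range k, Y i with hS'def
  have hS'app : ∀ ω, S' ω = ∑ i ∈ Finset.range k, Y i ω := by
    intro ω; rw [hS'def]; exact Finset.sum_apply ω _ _
  have hS'2 : MemLp S' 2 μ := memLp_finsetSum' _ (fun i _ => hY2 i)
  have hES' : μ[S'] = (k:ℝ) * lurothT c := by
    have h1 : μ[S'] = ∫ ω, ∑ i ∈ Finset.range k, Y i ω ∂μ := by
      congr 1; funext ω; exact hS'app ω
    rw [h1, integral_finset_sum _ (fun i _ => (hY2 i).integrable one_le_two)]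
    rw [Finset.sum_congr rfl (fun i _ => hEY i), Finset.sum_const, Finset.card_range,
      nsmul_eq_mul]
  have hpair : Set.Pairwise ↑(Finset.range k) fun i j => IndepFun (Y i) (Y j) μ := by
    intro i _ j _ hij
    exact (hindep.indepFun hij).comp
      (Measurable.of_discrete (f := fun m : ℕ => if 1 ≤ m ∧ m ≤ c then (m:ℝ) else 0))
      (Measurable.of_discrete (f := fun m : ℕ => if 1 ≤ m ∧ m ≤ c then (m:ℝ) else 0))
  have hVarS' : variance S' μ ≤ (k:ℝ) * (c:ℝ) := by
    rw [hS'def, IndepFun.variance_sum (fun i _ => hY2 i) hpair]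
    calc ∑ i ∈ Finset.range k, variance (Y i) μ ≤ ∑ i ∈ Finset.range k, (c:ℝ) :=
          Finset.sum_le_sum fun i _ => hVarY i
      _ = (k:ℝ) * (c:ℝ) := by
          rw [Finset.sum_const, Finset.card_range, nsmul_eq_mul]
  -- Chebyshev
  have hcheb := meas_ge_le_variance_div_sq (μ := μ) hS'2 (c := ε/4 * L) (by positivity)
  -- events
  set A : Set Ω := ⋃ i ∈ Finset.range k, {ω | ε/2 * L < (X i ω : ℝ)} with hAdef
  set B : Set Ω := ⋃ i ∈ Finset.range k, {ω | c < X i ω} with hBdef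
  set Cs : Set Ω := {ω | ε/4 * L ≤ |S' ω - μ[S']|} with hCdef
  have hsubset : {ω | ε < |(((∑ i ∈ Finset.range k, X i ω : ℕ) : ℝ)
      - (((Finset.range k).sup fun j => X j ω : ℕ) : ℝ)) / L - 1|} ⊆ A ∪ B ∪ Cs := by
    intro ω hω
    simp only [Set.mem_setOf_eq] at hω
    by_contra hco
    simp only [Set.mem_union, not_or] at hco
    obtain ⟨⟨hA, hB⟩, hC⟩ := hco
    rw [hAdef] at hA
    rw [hBdef] at hB
    rw [hCdef] at hC
    simp only [Set.mem_iUnion, Set.mem_setOf_eq, Finset.mem_range, exists_prop] at hA hB hC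
    push_neg at hA hB hC
    -- bound the max
    have hM : (((Finset.range k).sup fun j => X j ω : ℕ) : ℝ) ≤ ε/2 * L := by
      have h1 : (Finset.range k).sup (fun j => X j ω) ≤ ⌊ε/2 * L⌋₊ := by
        apply Finset.sup_le
        intro i hi
        exact Nat.le_floor (hA i (Finset.mem_range.mp hi))
      calc (((Finset.range k).sup fun j => X j ω : ℕ) : ℝ) ≤ (⌊ε/2 * L⌋₊ : ℝ) := by
            exact_mod_cast h1
        _ ≤ ε/2 * L := Nat.floor_le (by positivity)
    -- the sum equals the truncated sum
    have hs : ((∑ i ∈ Finset.range k, X i ω : ℕ) : ℝ) = S' ω := by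
      rw [hS'app, Nat.cast_sum]
      refine Finset.sum_congr rfl fun i hi => ?_
      simp only [hYdef]
      by_cases hx : X i ω = 0
      · simp [hx]
      · rw [if_pos ⟨Nat.one_le_iff_ne_zero.mpr hx, hB i (Finset.mem_range.mp hi)⟩]
    have hE : |μ[S'] - L| ≤ ε/4 * L := by
      rw [hES']
      have h1 : (k:ℝ) * lurothT c - L = (k:ℝ) * (lurothT c - Real.log k) := by
        rw [hLdef]; ring
      rw [h1, abs_mul, abs_of_nonneg hkpos.le]
      calc (k:ℝ) * |lurothT c - Real.log k| ≤ (k:ℝ) * (ε/4 * Real.log k) :=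
            mul_le_mul_of_nonneg_left hT hkpos.le
        _ = ε/4 * L := by rw [hLdef]; ring
    have h1 : |S' ω - L| ≤ ε/2 * L := by
      have h2 : S' ω - L = (S' ω - μ[S']) + (μ[S'] - L) := by ring
      calc |S' ω - L| ≤ |S' ω - μ[S']| + |μ[S'] - L| := by rw [h2]; exact abs_add_le _ _
        _ ≤ ε/4 * L + ε/4 * L := add_le_add hC.le hE
        _ = ε/2 * L := by ring
    set M : ℝ := (((Finset.range k).sup fun j => X j ω : ℕ) : ℝ) with hMdef
    have hM0 : (0:ℝ) ≤ M := Nat.cast_nonneg _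
    have h2 : |S' ω - M - L| ≤ ε * L := by
      have h3 : S' ω - M - L = (S' ω - L) + (-M) := by ring
      calc |S' ω - M - L| ≤ |S' ω - L| + |(-M)| := by rw [h3]; exact abs_add_le _ _
        _ = |S' ω - L| + M := by rw [abs_neg, abs_of_nonneg hM0]
        _ ≤ ε/2 * L + ε/2 * L := add_le_add h1 hM
        _ = ε * L := by ring
    have h4 : |(S' ω - M) / L - 1| ≤ ε := by
      rw [div_sub_one (ne_of_gt hLpos), abs_div, abs_of_pos hLpos, div_le_iff₀ hLpos]
      calc |S' ω - M - L| ≤ ε * L := h2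
        _ = ε * L := rfl
    rw [hs] at hω
    linarith
  -- tail bounds
  have htail' : ∀ (i : ℕ) (t : ℝ), 0 < t →
      μ {ω | t < (X i ω : ℝ)} ≤ ENNReal.ofReal (1/t) := by
    intro i t ht
    have h1 : {ω | t < (X i ω : ℝ)} = {ω | ⌊t⌋₊ < X i ω} := by
      ext ω
      simp only [Set.mem_setOf_eq]
      exact (Nat.floor_lt ht.le).symm
    rw [h1]
    refine (luroth_tail μ (X i) (hmeas i) (hdist i) ⌊t⌋₊).trans ?_
    apply ENNReal.ofReal_le_ofReal
    rw [one_div, one_div]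
    exact inv_anti₀ ht (Nat.lt_floor_add_one t).le
  have hnatmul : ∀ (x : ℝ), 0 ≤ x → (k:ENNReal) * ENNReal.ofReal x = ENNReal.ofReal ((k:ℝ) * x) := by
    intro x hx
    rw [← ENNReal.ofReal_natCast k, ← ENNReal.ofReal_mul (Nat.cast_nonneg k)]
  have hmuA : μ A ≤ ENNReal.ofReal ((2/ε)/Real.log k) := by
    rw [hAdef]
    refine (measure_biUnion_finset_le _ _).trans ?_
    calc ∑ i ∈ Finset.range k, μ {ω | ε/2 * L < (X i ω : ℝ)}
        ≤ ∑ i ∈ Finset.range k, ENNReal.ofReal (1/(ε/2 * L)) :=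
          Finset.sum_le_sum fun i _ => htail' i _ (by positivity)
      _ = (k:ENNReal) * ENNReal.ofReal (1/(ε/2 * L)) := by
          rw [Finset.sum_const, Finset.card_range, nsmul_eq_mul]
      _ = ENNReal.ofReal ((k:ℝ) * (1/(ε/2 * L))) := hnatmul _ (by positivity)
      _ ≤ ENNReal.ofReal ((2/ε)/Real.log k) := by
          apply ENNReal.ofReal_le_ofReal
          have hne1 : ε ≠ 0 := ne_of_gt hε
          have hne2 : (k:ℝ) ≠ 0 := ne_of_gt hkpos
          have hne3 : Real.log k ≠ 0 := ne_of_gt hlogpos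
          rw [hLdef]
          rw [show (k:ℝ) * (1/(ε/2 * ((k:ℝ) * Real.log k))) = (2/ε)/Real.log k from by
            field_simp]
  have hmuB : μ B ≤ ENNReal.ofReal (1/Real.log k) := by
    rw [hBdef]
    refine (measure_biUnion_finset_le _ _).trans ?_
    calc ∑ i ∈ Finset.range k, μ {ω | c < X i ω}
        ≤ ∑ i ∈ Finset.range k, ENNReal.ofReal (1/((c:ℝ)+1)) :=
          Finset.sum_le_sum fun i _ => luroth_tail μ (X i) (hmeas i) (hdist i) c
      _ = (k:ENNReal) * ENNReal.ofReal (1/((c:ℝ)+1)) := by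
          rw [Finset.sum_const, Finset.card_range, nsmul_eq_mul]
      _ = ENNReal.ofReal ((k:ℝ) * (1/((c:ℝ)+1))) := hnatmul _ (by positivity)
      _ ≤ ENNReal.ofReal (1/Real.log k) := by
          apply ENNReal.ofReal_le_ofReal
          have hne2 : (k:ℝ) ≠ 0 := ne_of_gt hkpos
          have hne3 : Real.log k ≠ 0 := ne_of_gt hlogpos
          have h5 : (k:ℝ) * (1/L) = 1/Real.log k := by
            rw [hLdef]; field_simp
          rw [← h5]
          apply mul_le_mul_of_nonneg_left _ hkpos.le
          exact one_div_le_one_div_of_le hLpos hclt.le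
  have hmuC : μ Cs ≤ ENNReal.ofReal ((16/ε^2)/Real.log k) := by
    rw [hCdef]
    refine hcheb.trans (ENNReal.ofReal_le_ofReal ?_)
    have hden : (0:ℝ) < (ε/4 * L)^2 := by positivity
    have h1 : variance S' μ ≤ (k:ℝ)^2 * Real.log k := by
      refine hVarS'.trans ?_
      have h2 : (k:ℝ) * (c:ℝ) ≤ (k:ℝ) * L := mul_le_mul_of_nonneg_left hcle hkpos.le
      calc (k:ℝ) * (c:ℝ) ≤ (k:ℝ) * L := h2
        _ = (k:ℝ)^2 * Real.log k := by rw [hLdef]; ring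
    have h3 : ((k:ℝ)^2 * Real.log k)/((ε/4 * L)^2) = (16/ε^2)/Real.log k := by
      have hne1 : ε ≠ 0 := ne_of_gt hε
      have hne2 : (k:ℝ) ≠ 0 := ne_of_gt hkpos
      have hne3 : Real.log k ≠ 0 := ne_of_gt hlogpos
      rw [hLdef]
      field_simp
      ring
    calc variance S' μ / (ε/4 * L)^2 ≤ ((k:ℝ)^2 * Real.log k)/((ε/4 * L)^2) :=
          (div_le_div_iff_of_pos_right hden).mpr h1
      _ = (16/ε^2)/Real.log k := h3
  have key : μ {ω | ε < |(((∑ i ∈ Finset.range k, X i ω : ℕ) : ℝ)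
      - (((Finset.range k).sup fun j => X j ω : ℕ) : ℝ)) / L - 1|}
      ≤ ENNReal.ofReal (C₀ / Real.log k) := by
    calc μ {ω | ε < |(((∑ i ∈ Finset.range k, X i ω : ℕ) : ℝ)
        - (((Finset.range k).sup fun j => X j ω : ℕ) : ℝ)) / L - 1|}
        ≤ μ (A ∪ B ∪ Cs) := measure_mono hsubset
      _ ≤ μ (A ∪ B) + μ Cs := measure_union_le _ _
      _ ≤ (μ A + μ B) + μ Cs := add_le_add_left (measure_union_le _ _) _
      _ ≤ (ENNReal.ofReal ((2/ε)/Real.log k) + ENNReal.ofReal (1/Real.log k))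
          + ENNReal.ofReal ((16/ε^2)/Real.log k) :=
          add_le_add (add_le_add hmuA hmuB) hmuC
      _ = ENNReal.ofReal (C₀ / Real.log k) := by
          rw [← ENNReal.ofReal_add (by positivity) (by positivity),
            ← ENNReal.ofReal_add (by positivity) (by positivity)]
          rw [← add_div, ← add_div, hC₀]
  exact ENNReal.toReal_le_of_le_ofReal (by positivity) key
end
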